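/- Let n ∈ ℕ, n ≥ 1, let a₁,…,aₙ be positive real numbers, and let α, β, p, q, k > 0 with kp < 1 and kq > 1. Then (1/n)·Σᵢ aᵢ·(α aᵢ^p + β aᵢ^q)^k ≥ ā·(α ā^p + β ā^q)^k, where ā = (1/n)·Σᵢ aᵢ is the arithmetic mean. -/

import Mathlib

open Finset Set

private lemma convex_poly_func (α β p q k : ℝ) (hα : 0 < α) (hβ : 0 < β)
    (hp : 0 < p) (hq : 0 < q) (hk : 0 < k) :
    ConvexOn ℝ (Set.Ioi (0:ℝ))
      (fun x : ℝ => x * (α * x ^ p + β * x ^ q) ^ k) := by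
  have hupos : ∀ x : ℝ, 0 < x → 0 < α * x ^ p + β * x ^ q := by
    intro x hx
    have h1 : 0 < x ^ p := Real.rpow_pos_of_pos hx p
    have h2 : 0 < x ^ q := Real.rpow_pos_of_pos hx q
    positivity
  have hxp : ∀ x : ℝ, 0 < x → x * x ^ (p - 1) = x ^ p := by
    intro x hx
    rw [mul_comm, ← Real.rpow_add_one hx.ne']
    ring_nf
  have hxq : ∀ x : ℝ, 0 < x → x * x ^ (q - 1) = x ^ q := by
    intro x hx
    rw [mul_comm, ← Real.rpow_add_one hx.ne']
    ring_nf
  have huk : ∀ x : ℝ, 0 < x → (α * x ^ p + β * x ^ q) ^ k =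
      (α * x ^ p + β * x ^ q) ^ (k - 1) * (α * x ^ p + β * x ^ q) := by
    intro x hx
    rw [← Real.rpow_add_one (hupos x hx).ne' (k - 1)]
    ring_nf
  have huk1 : ∀ x : ℝ, 0 < x → (α * x ^ p + β * x ^ q) ^ (k - 1) =
      (α * x ^ p + β * x ^ q) ^ (k - 2) * (α * x ^ p + β * x ^ q) := by
    intro x hx
    rw [← Real.rpow_add_one (hupos x hx).ne' (k - 2)]
    ring_nf
  have hu' : ∀ x : ℝ, 0 < x →
      HasDerivAt (fun y : ℝ => α * y ^ p + β * y ^ q)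
        (α * p * x ^ (p - 1) + β * q * x ^ (q - 1)) x := by
    intro x hx
    have h1 := (Real.hasDerivAt_rpow_const (p := p) (Or.inl hx.ne')).const_mul α
    have h2 := (Real.hasDerivAt_rpow_const (p := q) (Or.inl hx.ne')).const_mul β
    have := h1.add h2
    refine this.congr_deriv ?_
    ring
  -- first derivative
  have hderiv1 : ∀ x ∈ Set.Ioi (0:ℝ),
      HasDerivAt (fun x : ℝ => x * (α * x ^ p + β * x ^ q) ^ k)
        ((α * x ^ p + β * x ^ q) ^ (k - 1) *
          ((1 + k * p) * α * x ^ p + (1 + k * q) * β * x ^ q)) x := by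
    intro x hx
    rw [Set.mem_Ioi] at hx
    have hv : HasDerivAt (fun y : ℝ => (α * y ^ p + β * y ^ q) ^ k)
        ((α * p * x ^ (p - 1) + β * q * x ^ (q - 1)) * k *
          (α * x ^ p + β * x ^ q) ^ (k - 1)) x :=
      (hu' x hx).rpow_const (Or.inl (hupos x hx).ne')
    have h := (hasDerivAt_id x).mul hv
    simp only [id_eq, one_mul] at h
    refine h.congr_deriv ?_
    rw [huk x hx, ← hxp x hx, ← hxq x hx]
    ring
  -- second derivative
  have hderiv2 : ∀ x ∈ Set.Ioi (0:ℝ),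
      HasDerivAt (fun x : ℝ => (α * x ^ p + β * x ^ q) ^ (k - 1) *
          ((1 + k * p) * α * x ^ p + (1 + k * q) * β * x ^ q))
        (((k - 1) * (α * x ^ p + β * x ^ q) ^ (k - 2) *
            (α * p * x ^ (p - 1) + β * q * x ^ (q - 1))) *
            ((1 + k * p) * α * x ^ p + (1 + k * q) * β * x ^ q) +
          (α * x ^ p + β * x ^ q) ^ (k - 1) *
            ((1 + k * p) * α * p * x ^ (p - 1) + (1 + k * q) * β * q * x ^ (q - 1))) x := by
    intro x hx
    rw [Set.mem_Ioi] at hx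
    have hv1 : HasDerivAt (fun y : ℝ => (α * y ^ p + β * y ^ q) ^ (k - 1))
        ((α * p * x ^ (p - 1) + β * q * x ^ (q - 1)) * (k - 1) *
          (α * x ^ p + β * x ^ q) ^ (k - 1 - 1)) x :=
      (hu' x hx).rpow_const (Or.inl (hupos x hx).ne')
    have hw : HasDerivAt (fun y : ℝ => (1 + k * p) * α * y ^ p + (1 + k * q) * β * y ^ q)
        ((1 + k * p) * α * (p * x ^ (p - 1)) + (1 + k * q) * β * (q * x ^ (q - 1))) x :=
      ((Real.hasDerivAt_rpow_const (p := p) (Or.inl hx.ne')).const_mul ((1 + k * p) * α)).add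
        ((Real.hasDerivAt_rpow_const (p := q) (Or.inl hx.ne')).const_mul ((1 + k * q) * β))
    have h := hv1.mul hw
    refine h.congr_deriv ?_
    rw [show k - 1 - 1 = k - 2 by ring]
    ring
  -- nonnegativity of the second derivative
  have hg'nonneg : ∀ x : ℝ, 0 < x → 0 ≤
      ((k - 1) * (α * x ^ p + β * x ^ q) ^ (k - 2) *
          (α * p * x ^ (p - 1) + β * q * x ^ (q - 1))) *
          ((1 + k * p) * α * x ^ p + (1 + k * q) * β * x ^ q) +
        (α * x ^ p + β * x ^ q) ^ (k - 1) *
          ((1 + k * p) * α * p * x ^ (p - 1) + (1 + k * q) * β * q * x ^ (q - 1)) := by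
    intro x hx
    have hApos : 0 < α * x ^ p := by
      have := Real.rpow_pos_of_pos hx p; positivity
    have hBpos : 0 < β * x ^ q := by
      have := Real.rpow_pos_of_pos hx q; positivity
    have hukpos : 0 < (α * x ^ p + β * x ^ q) ^ (k - 2) :=
      Real.rpow_pos_of_pos (hupos x hx) _
    have key : x *
        (((k - 1) * (α * x ^ p + β * x ^ q) ^ (k - 2) *
            (α * p * x ^ (p - 1) + β * q * x ^ (q - 1))) *
            ((1 + k * p) * α * x ^ p + (1 + k * q) * β * x ^ q) +
          (α * x ^ p + β * x ^ q) ^ (k - 1) *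
            ((1 + k * p) * α * p * x ^ (p - 1) + (1 + k * q) * β * q * x ^ (q - 1))) =
        (α * x ^ p + β * x ^ q) ^ (k - 2) *
          (k * p * (1 + k * p) * (α * x ^ p) ^ 2 + k * q * (1 + k * q) * (β * x ^ q) ^ 2 +
            (k * (p + q) + k * (p - q) ^ 2 + 2 * k ^ 2 * p * q) * ((α * x ^ p) * (β * x ^ q))) := by
      rw [huk1 x hx, ← hxp x hx, ← hxq x hx]
      ring
    have hE : 0 ≤ k * p * (1 + k * p) * (α * x ^ p) ^ 2 + k * q * (1 + k * q) * (β * x ^ q) ^ 2 +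
        (k * (p + q) + k * (p - q) ^ 2 + 2 * k ^ 2 * p * q) * ((α * x ^ p) * (β * x ^ q)) := by
      have h1 : 0 ≤ k * p * (1 + k * p) := by positivity
      have h2 : 0 ≤ k * q * (1 + k * q) := by positivity
      have h3 : 0 ≤ k * (p + q) + k * (p - q) ^ 2 + 2 * k ^ 2 * p * q := by positivity
      have h6 : 0 ≤ (α * x ^ p) * (β * x ^ q) := (mul_pos hApos hBpos).le
      nlinarith [sq_nonneg (α * x ^ p), sq_nonneg (β * x ^ q)]
    have hmul : 0 ≤ x *
        (((k - 1) * (α * x ^ p + β * x ^ q) ^ (k - 2) *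
            (α * p * x ^ (p - 1) + β * q * x ^ (q - 1))) *
            ((1 + k * p) * α * x ^ p + (1 + k * q) * β * x ^ q) +
          (α * x ^ p + β * x ^ q) ^ (k - 1) *
            ((1 + k * p) * α * p * x ^ (p - 1) + (1 + k * q) * β * q * x ^ (q - 1))) := by
      rw [key]
      exact mul_nonneg hukpos.le hE
    exact nonneg_of_mul_nonneg_right hmul hx
  -- assemble
  have hint : interior (Set.Ioi (0:ℝ)) = Set.Ioi 0 := interior_Ioi
  refine convexOn_of_hasDerivWithinAt2_nonneg
    (f' := fun x => (α * x ^ p + β * x ^ q) ^ (k - 1) *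
      ((1 + k * p) * α * x ^ p + (1 + k * q) * β * x ^ q))
    (f'' := fun x => ((k - 1) * (α * x ^ p + β * x ^ q) ^ (k - 2) *
          (α * p * x ^ (p - 1) + β * q * x ^ (q - 1))) *
          ((1 + k * p) * α * x ^ p + (1 + k * q) * β * x ^ q) +
        (α * x ^ p + β * x ^ q) ^ (k - 1) *
          ((1 + k * p) * α * p * x ^ (p - 1) + (1 + k * q) * β * q * x ^ (q - 1)))
    (convex_Ioi 0) ?_ ?_ ?_ ?_
  · intro x hx
    exact ((hderiv1 x hx).continuousAt).continuousWithinAt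
  · intro x hx
    rw [hint] at hx ⊢
    exact (hderiv1 x hx).hasDerivWithinAt
  · intro x hx
    rw [hint] at hx ⊢
    exact (hderiv2 x hx).hasDerivWithinAt
  · intro x hx
    rw [hint] at hx
    exact hg'nonneg x hx

/-- Jensen-type inequality for `f(x) = x (α x^p + β x^q)^k`:
`(1/n) Σᵢ aᵢ (α aᵢ^p + β aᵢ^q)^k ≥ ā (α ā^p + β ā^q)^k` where `ā` is the arithmetic
mean of the positive numbers `a₁, …, aₙ`. -/
theorem mean_inequality_poly_func
    (n : ℕ) (hn : 1 ≤ n) (a : Fin n → ℝ) (ha : ∀ i, 0 < a i)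
    (α β p q k : ℝ) (hα : 0 < α) (hβ : 0 < β) (hp : 0 < p) (hq : 0 < q) (hk : 0 < k)
    (hkp : k * p < 1) (hkq : 1 < k * q) :
    ((1 / (n : ℝ)) * ∑ i, a i) *
      (α * ((1 / (n : ℝ)) * ∑ i, a i) ^ p + β * ((1 / (n : ℝ)) * ∑ i, a i) ^ q) ^ k ≤
    (1 / (n : ℝ)) * ∑ i, a i * (α * a i ^ p + β * a i ^ q) ^ k := by
  have hn0 : (0:ℝ) < (n:ℝ) := by exact_mod_cast hn
  have hconv := convex_poly_func α β p q k hα hβ hp hq hk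
  have hw : ∑ _i : Fin n, (1 / (n:ℝ)) = 1 := by
    rw [Finset.sum_const, Finset.card_univ, Fintype.card_fin, nsmul_eq_mul]
    field_simp
  have hmem : ∀ i ∈ (Finset.univ : Finset (Fin n)), a i ∈ Set.Ioi (0:ℝ) := fun i _ => ha i
  have h₀ : ∀ i ∈ (Finset.univ : Finset (Fin n)), (0:ℝ) ≤ 1 / (n:ℝ) := fun i _ => by positivity
  have jensen := hconv.map_sum_le h₀ hw hmem
  simp only [smul_eq_mul] at jensen
  rw [← Finset.mul_sum, ← Finset.mul_sum] at jensen
  exact jensen
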